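/- mixValue is monotone: if L₁ ⊆ L₂, R₁ ⊆ R₂, with L₂ and R₂ disjoint finite sets of reals, then mixValue(L₁,R₁) ≤ mixValue(L₂,R₂). -/

import Mathlib

/-- Number of maximal blocks of equal symbols in a string over `{L,R}` (as `Bool`s). -/
def blocks : List Bool → ℕ
  | [] => 0
  | [_] => 1
  | a :: b :: l => (if a = b then 0 else 1) + blocks (b :: l)

/-- The labeled merge of two finite sets of reals: sort `L ∪ R` increasingly and
label each element by whether it came from `L` (`true`) or not. -/
noncomputable def mix (L R : Finset ℝ) : List Bool :=
  ((L ∪ R).sort (· ≤ ·)).map (fun x => decide (x ∈ L))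

/-- `mixValue L R` is the number of maximal same-origin blocks in the merged sorted sequence. -/
noncomputable def mixValue (L R : Finset ℝ) : ℕ := blocks (mix L R)

lemma blocks_le_cons (a : Bool) (l : List Bool) : blocks l ≤ blocks (a :: l) := by
  cases l with
  | nil => simp [blocks]
  | cons b t => simp only [blocks]; omega

lemma one_le_blocks (a : Bool) (l : List Bool) : 1 ≤ blocks (a :: l) := by
  induction l generalizing a with
  | nil => simp [blocks]
  | cons b t ih => simp only [blocks]; have := ih b; omega

lemma blocks_cons_le_cons_cons (a c : Bool) (t : List Bool) :
    blocks (a :: t) ≤ blocks (a :: c :: t) := by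
  cases t with
  | nil => simp only [blocks]; split <;> simp
  | cons b t' =>
    simp only [blocks]
    by_cases hab : a = b <;> by_cases hac : a = c <;> by_cases hcb : c = b <;>
      simp_all <;> omega

lemma blocks_cons_mono {s t : List Bool} (h : s.Sublist t) :
    ∀ a, blocks (a :: s) ≤ blocks (a :: t) := by
  induction h with
  | slnil => intro a; exact le_refl _
  | cons c h ih =>
    intro a
    exact (ih a).trans (blocks_cons_le_cons_cons a c _)
  | cons_cons c h ih =>
    intro a
    simp only [blocks]
    exact Nat.add_le_add_left (ih c) _

lemma blocks_mono {s t : List Bool} (h : s.Sublist t) : blocks s ≤ blocks t := by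
  induction h with
  | slnil => exact le_refl _
  | cons c h ih => exact ih.trans (blocks_le_cons c _)
  | cons_cons c h _ => exact blocks_cons_mono h c

theorem mixValue_mono (L₁ L₂ R₁ R₂ : Finset ℝ)
    (hL : L₁ ⊆ L₂) (hR : R₁ ⊆ R₂) (h : Disjoint L₂ R₂) :
    mixValue L₁ R₁ ≤ mixValue L₂ R₂ := by
  apply blocks_mono
  unfold mix
  have hsub : ((L₁ ∪ R₁).sort (· ≤ ·)).Sublist ((L₂ ∪ R₂).sort (· ≤ ·)) := by
    apply List.sublist_of_subperm_of_pairwise _ ((L₁ ∪ R₁).pairwise_sort _)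
      ((L₂ ∪ R₂).pairwise_sort _)
    apply List.Nodup.subperm ((L₁ ∪ R₁).sort_nodup _)
    intro x hx
    rw [Finset.mem_sort] at hx ⊢
    exact Finset.union_subset_union hL hR hx
  have hmap : ((L₁ ∪ R₁).sort (· ≤ ·)).map (fun x => decide (x ∈ L₁)) =
      ((L₁ ∪ R₁).sort (· ≤ ·)).map (fun x => decide (x ∈ L₂)) := by
    apply List.map_congr_left
    intro x hx
    rw [Finset.mem_sort, Finset.mem_union] at hx
    rcases hx with hx | hx
    · simp [hx, hL hx]
    · have hx2 : x ∉ L₂ := Finset.disjoint_right.mp h (hR hx)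
      have hx1 : x ∉ L₁ := fun hc => hx2 (hL hc)
      simp [hx1, hx2]
  rw [hmap]
  exact hsub.map _
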